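/- Let p be a pattern, S ∈ p, and u ∈ S. Let p' be obtained from p by replacing S with S \ {u}. Then p dominates p': every pattern q consistent with p' is also consistent with p. -/

import Mathlib

open Finset
open scoped Classical

namespace PatternST

variable {α : Type*} [DecidableEq α]

/-- `p` is a pattern over ground set `U` with zero element `z`:
a family of subsets of `U ∪ {z}` with exactly one member containing `z`. -/
def IsPattern (z : α) (U : Finset α) (p : Finset (Finset α)) : Prop :=
  (∀ S ∈ p, S ⊆ insert z U) ∧ ∃! S, S ∈ p ∧ z ∈ S

/-- Two sets are linked if one belongs to `p`, the other to `q`, and they intersect. -/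
def linkRel (p q : Finset (Finset α)) (S T : Finset α) : Prop :=
  ((S ∈ p ∧ T ∈ q) ∨ (S ∈ q ∧ T ∈ p)) ∧ (S ∩ T).Nonempty

/-- Reflexive-transitive (and, by symmetry of `linkRel`, symmetric) closure. -/
def conn (p q : Finset (Finset α)) : Finset α → Finset α → Prop :=
  Relation.ReflTransGen (linkRel p q)

/-- The join `p ⋈ q`: unions of the equivalence classes of `conn` on `p ∪ q`. -/
noncomputable def pjoin (p q : Finset (Finset α)) : Finset (Finset α) :=
  (p ∪ q).image fun S => ((p ∪ q).filter fun T => conn p q S T).sup id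

/-- `p` and `q` are consistent if `p ⋈ q` consists of a single set. -/
def consistent (p q : Finset (Finset α)) : Prop := (pjoin p q).card = 1

/-- The labels (elements of `U`, i.e. everything except `z`) occurring in `p`. -/
def lbs (z : α) (p : Finset (Finset α)) : Finset α := (p.sup id).erase z

/-- The labels appearing as singletons in `p`. -/
def sing (z : α) (p : Finset (Finset α)) : Finset α :=
  (lbs z p).filter fun u => ({u} : Finset α) ∈ p

/-- A pattern is complete if every occurring label occurs as a singleton. -/
def Complete (z : α) (p : Finset (Finset α)) : Prop := lbs z p = sing z p

lemma linkRel_symm' {p q : Finset (Finset α)} {A B : Finset α}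
    (h : linkRel p q A B) : linkRel p q B A :=
  ⟨(h.1.imp (fun h => ⟨h.2, h.1⟩) (fun h => ⟨h.2, h.1⟩)).symm,
    by rw [Finset.inter_comm]; exact h.2⟩

lemma conn_symm' {p q : Finset (Finset α)} {A B : Finset α}
    (h : conn p q A B) : conn p q B A :=
  by
    unfold conn at h ⊢
    induction h with
    | refl => exact Relation.ReflTransGen.refl
    | tail _ hbc ih => exact Relation.ReflTransGen.head (linkRel_symm' hbc) ih

/-- Removing an element from a set of `p` yields a pattern dominated by `p`. -/
theorem removing_element_dominated (z : α) (U : Finset α) (p : Finset (Finset α))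
    (hp : IsPattern z U p) (S : Finset α) (hS : S ∈ p) (u : α) (hu : u ∈ S) :
    ∀ q : Finset (Finset α), IsPattern z U q →
      consistent (insert (S.erase u) (p.erase S)) q → consistent p q := by
  intro q hq hcons
  classical
  set E := S.erase u with hE
  set p' := insert E (p.erase S) with hp'
  obtain ⟨Z, ⟨hZq, hzZ⟩, hZuniq⟩ := hq.2
  obtain ⟨c, hc⟩ := Finset.card_eq_one.mp hcons
  set M := p' ∪ q with hM
  have hZM : Z ∈ M := Finset.mem_union_right _ hZq
  have hEp' : E ∈ p' := Finset.mem_insert_self _ _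
  have hEM : E ∈ M := Finset.mem_union_left _ hEp'
  have hK : ∀ A ∈ M, ((M.filter fun T => conn p' q A T).sup id) = c := by
    intro A hA
    have h1 : ((M.filter fun T => conn p' q A T).sup id) ∈ pjoin p' q :=
      Finset.mem_image_of_mem _ hA
    rw [hc] at h1
    exact Finset.mem_singleton.mp h1
  have hzK : ∀ A ∈ M, z ∈ ((M.filter fun T => conn p' q A T).sup id) := by
    intro A hA
    rw [hK A hA, ← hK Z hZM]
    exact Finset.mem_sup.mpr
      ⟨Z, Finset.mem_filter.mpr ⟨hZM, Relation.ReflTransGen.refl⟩, hzZ⟩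
  have hT : ∀ A ∈ M, ∃ T ∈ M, conn p' q A T ∧ z ∈ T := by
    intro A hA
    obtain ⟨T, hTf, hzT⟩ := Finset.mem_sup.mp (hzK A hA)
    exact ⟨T, (Finset.mem_filter.mp hTf).1, (Finset.mem_filter.mp hTf).2, hzT⟩
  -- every member of M is connected (w.r.t. p', q) to Z
  have hconnZ : ∀ A ∈ M, conn p' q A Z := by
    intro A hA
    obtain ⟨T, hTM, hAT, hzT⟩ := hT A hA
    rcases Finset.mem_union.mp hTM with hTp | hTq
    · exact hAT.tail ⟨Or.inl ⟨hTp, hZq⟩, ⟨z, Finset.mem_inter.mpr ⟨hzT, hzZ⟩⟩⟩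
    · rwa [hZuniq T ⟨hTq, hzT⟩] at hAT
  -- all members of M are nonempty
  have hne : ∀ A ∈ M, A.Nonempty := by
    intro A hA
    obtain ⟨T, _, hAT, hzT⟩ := hT A hA
    rcases Relation.ReflTransGen.cases_head hAT with h0 | ⟨X, hAX, _⟩
    · exact ⟨z, h0 ▸ hzT⟩
    · obtain ⟨x, hx⟩ := hAX.2
      exact ⟨x, (Finset.mem_inter.mp hx).1⟩
  -- transfer of single links
  have hstep : ∀ A B : Finset α, linkRel p' q A B →
      conn p q (if A = E then S else A) (if B = E then S else B) := by
    have main : ∀ A B : Finset α, A ∈ p' → B ∈ q → (A ∩ B).Nonempty →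
        conn p q (if A = E then S else A) (if B = E then S else B) := by
      intro A B hA hB hAB
      by_cases hAE : A = E
      · by_cases hBE : B = E
        · simp only [if_pos hAE, if_pos hBE]
          exact Relation.ReflTransGen.refl
        · have hSB : (S ∩ B).Nonempty := by
            obtain ⟨x, hx⟩ := hAB
            rw [Finset.mem_inter] at hx
            exact ⟨x, Finset.mem_inter.mpr
              ⟨Finset.mem_of_mem_erase (hE ▸ hAE ▸ hx.1), hx.2⟩⟩
          simp only [if_pos hAE, if_neg hBE]
          exact Relation.ReflTransGen.single ⟨Or.inl ⟨hS, hB⟩, hSB⟩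
      · have hAp : A ∈ p :=
          Finset.mem_of_mem_erase ((Finset.mem_insert.mp hA).resolve_left hAE)
        by_cases hBE : B = E
        · have h1 : linkRel p q A B := ⟨Or.inl ⟨hAp, hB⟩, hAB⟩
          have h2 : linkRel p q S B := by
            refine ⟨Or.inl ⟨hS, hB⟩, ?_⟩
            obtain ⟨x, hx⟩ := hAB
            rw [Finset.mem_inter] at hx
            exact ⟨x, Finset.mem_inter.mpr
              ⟨Finset.mem_of_mem_erase (hE ▸ hBE ▸ hx.2), hx.2⟩⟩
          simp only [if_neg hAE, if_pos hBE]
          exact (Relation.ReflTransGen.single h1).tail (linkRel_symm' h2)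
        · simp only [if_neg hAE, if_neg hBE]
          exact Relation.ReflTransGen.single ⟨Or.inl ⟨hAp, hB⟩, hAB⟩
    intro A B hAB
    rcases hAB.1 with ⟨hA, hB⟩ | ⟨hA, hB⟩
    · exact main A B hA hB hAB.2
    · exact conn_symm' (main B A hB hA (by rw [Finset.inter_comm]; exact hAB.2))
  -- transfer of connectivity
  have hconv : ∀ A B : Finset α, conn p' q A B →
      conn p q (if A = E then S else A) (if B = E then S else B) := by
    intro A B h
    unfold conn at h
    induction h with
    | refl => exact Relation.ReflTransGen.refl
    | tail _ hbc ih => exact ih.trans (hstep _ _ hbc)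
  -- endpoint fix at Z
  have hφZ : conn p q (if Z = E then S else Z) Z := by
    by_cases hZE : Z = E
    · simp only [if_pos hZE]
      refine Relation.ReflTransGen.single ⟨Or.inl ⟨hS, hZq⟩, ⟨z, ?_⟩⟩
      exact Finset.mem_inter.mpr ⟨Finset.mem_of_mem_erase (hE ▸ hZE ▸ hzZ), hzZ⟩
    · simp only [if_neg hZE]
      exact Relation.ReflTransGen.refl
  -- every member of p ∪ q is connected (w.r.t. p, q) to Z
  have hAZ : ∀ A ∈ p ∪ q, conn p q A Z := by
    intro A hA
    by_cases hAS : A = S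
    · -- use A' = E
      have h1 : conn p q (if E = E then S else E) (if Z = E then S else Z) :=
        hconv E Z (hconnZ E hEM)
      rw [if_pos rfl] at h1
      exact hAS ▸ (h1.trans hφZ)
    · have hAM : A ∈ M := by
        rcases Finset.mem_union.mp hA with hAp | hAq
        · exact Finset.mem_union_left _
            (Finset.mem_insert_of_mem (Finset.mem_erase.mpr ⟨hAS, hAp⟩))
        · exact Finset.mem_union_right _ hAq
      have h1 : conn p q (if A = E then S else A) (if Z = E then S else Z) :=
        hconv A Z (hconnZ A hAM)
      have h2 : conn p q A (if A = E then S else A) := by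
        by_cases hAE : A = E
        · rw [if_pos hAE]
          -- need conn p q A S with A = E ∈ p ∪ q
          by_cases hAq : A ∈ q
          · obtain ⟨x, hx⟩ := hne E hEM
            refine Relation.ReflTransGen.single
              ⟨Or.inr ⟨hAq, hS⟩, ⟨x, Finset.mem_inter.mpr ?_⟩⟩
            exact ⟨hAE ▸ hx, Finset.mem_of_mem_erase (hE ▸ hx)⟩
          · have hAp : A ∈ p := (Finset.mem_union.mp hA).resolve_right hAq
            have hEZ : E ≠ Z := fun h => hAq (hAE ▸ h ▸ hZq)
            rcases Relation.ReflTransGen.cases_head (hconnZ E hEM) with h0 | hstep0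
            · exact absurd h0 hEZ
            · obtain ⟨X, hEX, _⟩ := hstep0
              have hXq : X ∈ q ∧ (E ∩ X).Nonempty := by
                rcases hEX.1 with ⟨_, hXq⟩ | ⟨hEq, _⟩
                · exact ⟨hXq, hEX.2⟩
                · exact absurd (hAE ▸ hEq) hAq
              obtain ⟨x, hx⟩ := hXq.2
              rw [Finset.mem_inter] at hx
              have l1 : linkRel p q A X :=
                ⟨Or.inl ⟨hAp, hXq.1⟩, ⟨x, Finset.mem_inter.mpr ⟨hAE ▸ hx.1, hx.2⟩⟩⟩
              have l2 : linkRel p q S X :=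
                ⟨Or.inl ⟨hS, hXq.1⟩,
                  ⟨x, Finset.mem_inter.mpr ⟨Finset.mem_of_mem_erase (hE ▸ hx.1), hx.2⟩⟩⟩
              exact (Relation.ReflTransGen.single l1).tail (linkRel_symm' l2)
        · rw [if_neg hAE]
          exact Relation.ReflTransGen.refl
      exact (h2.trans h1).trans hφZ
  -- conclude
  have hconnAB : ∀ A ∈ p ∪ q, ∀ B ∈ p ∪ q, conn p q A B :=
    fun A hA B hB => (hAZ A hA).trans (conn_symm' (hAZ B hB))
  have hf : ∀ A ∈ p ∪ q, ((p ∪ q).filter fun T => conn p q A T) = p ∪ q := by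
    intro A hA
    exact Finset.filter_true_of_mem fun T hT => hconnAB A hA T hT
  have hZpq : Z ∈ p ∪ q := Finset.mem_union_right _ hZq
  rw [consistent, Finset.card_eq_one]
  refine ⟨(p ∪ q).sup id, ?_⟩
  ext x
  simp only [pjoin, Finset.mem_image, Finset.mem_singleton]
  constructor
  · rintro ⟨A, hA, rfl⟩
    rw [hf A hA]
  · rintro rfl
    exact ⟨Z, hZpq, by rw [hf Z hZpq]⟩

end PatternST
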